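/- For open sets J, K ⊆ ℝ and names ρ, σ, τ: if J ⊩ σ = τ and K ⊩ ρ ∈ σ, then (J ∩ K) ⊩ ρ ∈ τ. -/

import Mathlib

/-- Names over ℝ: a name is a family of pairs of a name and an open set of reals. -/
inductive Name : Type 1
  | mk (ι : Type) (elem : ι → Name) (cond : ι → Set ℝ) (hopen : ∀ i, IsOpen (cond i)) : Name

namespace Name

/-- The index type of the family of pairs of a name. -/
def idx : Name → Type
  | mk ι _ _ _ => ι

/-- The name component of the `i`-th pair. -/
def elem : (σ : Name) → σ.idx → Name
  | mk _ e _ _ => e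

/-- The open-set component of the `i`-th pair. -/
def cond : (σ : Name) → σ.idx → Set ℝ
  | mk _ _ c _ => c

theorem cond_isOpen : ∀ (σ : Name) (i : σ.idx), IsOpen (σ.cond i)
  | mk _ _ _ h => h

/-- Rank of a name, used for the recursive definition of forcing. -/
noncomputable def rank : Name → Ordinal.{0}
  | mk _ e _ _ => Ordinal.lsub fun i => rank (e i)

theorem rank_elem_lt : ∀ (σ : Name) (i : σ.idx), (σ.elem i).rank < σ.rank
  | mk ι e c h, i => by
    simpa [rank, elem] using Ordinal.lt_lsub (fun i => rank (e i)) i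

theorem rank_measure_lt_left {a a' b : Ordinal.{0}} (h : a' < a) :
    Prod.Lex (· < ·) (· < ·) (max a' b, min a' b) (max a b, min a b) := by
  rcases le_total a b with hab | hab
  · rw [max_eq_right hab, min_eq_left hab, max_eq_right (h.le.trans hab),
      min_eq_left (h.le.trans hab)]
    exact Prod.Lex.right _ h
  · rw [max_eq_left hab, min_eq_right hab]
    rcases lt_or_eq_of_le (max_le h.le hab) with hm | hm
    · exact Prod.Lex.left _ _ hm
    · rw [hm]
      apply Prod.Lex.right
      rcases le_total a' b with h' | h'
      · rw [max_eq_right h'] at hm; rw [min_eq_left h']; rw [hm]; exact h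
      · rw [max_eq_left h'] at hm; exact absurd hm h.ne

mutual
  /-- `feq σ τ J` means `J ⊩ σ = τ`. -/
  def feq (σ τ : Name) (J : Set ℝ) : Prop :=
    (∀ i : σ.idx, fmem (σ.elem i) τ (J ∩ σ.cond i)) ∧
    (∀ j : τ.idx, fmem (τ.elem j) σ (J ∩ τ.cond j))
  termination_by (max σ.rank τ.rank, min σ.rank τ.rank)
  decreasing_by
    · exact rank_measure_lt_left (rank_elem_lt σ i)
    · rw [max_comm σ.rank, min_comm σ.rank]
      exact rank_measure_lt_left (rank_elem_lt τ j)

  /-- `fmem σ τ J` means `J ⊩ σ ∈ τ`. -/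
  def fmem (σ τ : Name) (J : Set ℝ) : Prop :=
    ∀ r ∈ J, ∃ (j : τ.idx) (J' : Set ℝ), IsOpen J' ∧ r ∈ J' ∩ τ.cond j ∧
      feq σ (τ.elem j) (J' ∩ τ.cond j)
  termination_by (max σ.rank τ.rank, min σ.rank τ.rank)
  decreasing_by
    rw [max_comm σ.rank, min_comm σ.rank, max_comm σ.rank, min_comm σ.rank]
    exact rank_measure_lt_left (rank_elem_lt τ j)
end

end Name

namespace Name

theorem fmem_mono {σ τ : Name} {J J' : Set ℝ} (h : fmem σ τ J) (hsub : J' ⊆ J) :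
    fmem σ τ J' := by
  rw [fmem] at h ⊢
  exact fun r hr => h r (hsub hr)

theorem feq_mono {σ τ : Name} {J J' : Set ℝ} (h : feq σ τ J) (hsub : J' ⊆ J) :
    feq σ τ J' := by
  rw [feq] at h ⊢
  exact ⟨fun i => fmem_mono (h.1 i) (Set.inter_subset_inter_left _ hsub),
    fun j => fmem_mono (h.2 j) (Set.inter_subset_inter_left _ hsub)⟩

theorem feq_symm {σ τ : Name} {J : Set ℝ} (h : feq σ τ J) : feq τ σ J := by
  rw [feq] at h ⊢
  exact ⟨h.2, h.1⟩

mutual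
  theorem feq_trans (ρ σ τ : Name) (A B : Set ℝ) (h1 : feq ρ σ A) (h2 : feq σ τ B) :
      feq ρ τ (A ∩ B) := by
    have h2' := h2
    rw [feq] at h1 ⊢
    rw [feq] at h2
    constructor
    · intro i
      have := fmem_congr (ρ.elem i) σ τ B (A ∩ ρ.cond i) h2' (h1.1 i)
      refine fmem_mono this ?_
      intro x hx
      exact ⟨hx.1.2, hx.1.1, hx.2⟩
    · intro k
      have hs : feq σ ρ A := feq_symm (by rw [feq]; exact h1)
      have := fmem_congr (τ.elem k) σ ρ A (B ∩ τ.cond k) hs (h2.2 k)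
      refine fmem_mono this ?_
      intro x hx
      exact ⟨hx.1.1, hx.1.2, hx.2⟩
  termination_by (max ρ.rank τ.rank, min ρ.rank τ.rank)
  decreasing_by
    · exact rank_measure_lt_left (rank_elem_lt ρ i)
    · rw [max_comm ρ.rank, min_comm ρ.rank]
      exact rank_measure_lt_left (rank_elem_lt τ k)

  theorem fmem_congr (ρ σ τ : Name) (A B : Set ℝ) (h1 : feq σ τ A) (h2 : fmem ρ σ B) :
      fmem ρ τ (A ∩ B) := by
    rw [fmem] at h2 ⊢
    rw [feq] at h1
    intro r hr
    obtain ⟨j, J', hJ'open, hrJ', heq⟩ := h2 r hr.2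
    have hm := h1.1 j
    rw [fmem] at hm
    obtain ⟨k, J'', hJ''open, hrJ'', heq2⟩ := hm r ⟨hr.1, hrJ'.2⟩
    refine ⟨k, J' ∩ σ.cond j ∩ J'', (hJ'open.inter (σ.cond_isOpen j)).inter hJ''open,
      ⟨⟨hrJ', hrJ''.1⟩, hrJ''.2⟩, ?_⟩
    have := feq_trans ρ (σ.elem j) (τ.elem k) (J' ∩ σ.cond j) (J'' ∩ τ.cond k) heq heq2
    refine feq_mono this ?_
    intro x hx
    exact ⟨hx.1.1, hx.1.2, hx.2⟩
  termination_by (max ρ.rank τ.rank, min ρ.rank τ.rank)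
  decreasing_by
    rw [max_comm ρ.rank, min_comm ρ.rank, max_comm ρ.rank, min_comm ρ.rank]
    exact rank_measure_lt_left (rank_elem_lt τ k)
end

end Name

theorem forces_mem_congr_right (J K : Set ℝ) (hJ : IsOpen J) (hK : IsOpen K) (ρ σ τ : Name)
    (h₁ : Name.feq σ τ J) (h₂ : Name.fmem ρ σ K) : Name.fmem ρ τ (J ∩ K) := by
  exact Name.fmem_congr ρ σ τ J K h₁ h₂
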